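/- The product ∏_{k=1}^{i}(1 - 1/(2k)) is at least (1/2)·sqrt(1/(2i)) for all positive integers i. -/

import Mathlib

theorem stmt_9 (i : ℕ) (hi : 1 ≤ i) :
    (1 / 2 : ℝ) * Real.sqrt (1 / (2 * (i : ℝ))) ≤
      ∏ k ∈ Finset.Icc 1 i, (1 - 1 / (2 * (k : ℝ))) := by
  induction i, hi using Nat.le_induction with
  | base =>
      simp only [Finset.Icc_self, Finset.prod_singleton, Nat.cast_one]
      have h1 : Real.sqrt (1 / (2 * 1)) ≤ 1 := Real.sqrt_le_one.mpr (by norm_num)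
      have h2 := Real.sqrt_nonneg (1 / (2 * 1) : ℝ)
      nlinarith
  | succ n hn ih =>
      have hn1 : (1:ℝ) ≤ n := by exact_mod_cast hn
      rw [Finset.prod_Icc_succ_top (by omega : 1 ≤ n+1)]
      have hc : (0:ℝ) < 1 - 1 / (2 * ((n:ℝ)+1)) := by
        rw [sub_pos, div_lt_one (by linarith)]; linarith
      push_cast
      have key : Real.sqrt (1 / (2 * ((n:ℝ)+1))) ≤
          Real.sqrt (1 / (2 * (n:ℝ))) * (1 - 1 / (2 * ((n:ℝ)+1))) := by
        have : Real.sqrt (1 / (2 * (n:ℝ))) * (1 - 1 / (2 * ((n:ℝ)+1)))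
            = Real.sqrt (1 / (2 * (n:ℝ)) * (1 - 1 / (2 * ((n:ℝ)+1)))^2) := by
          rw [Real.sqrt_mul (by positivity), Real.sqrt_sq hc.le]
        rw [this]
        apply Real.sqrt_le_sqrt
        rw [div_le_iff₀ (by linarith)]
        have hne : (2 * ((n:ℝ)+1)) ≠ 0 := by positivity
        have hne2 : (2 * (n:ℝ)) ≠ 0 := by positivity
        field_simp
        nlinarith [sq_nonneg ((n:ℝ))]
      calc (1/2:ℝ) * Real.sqrt (1 / (2 * ((n:ℝ)+1)))
          ≤ (1/2) * (Real.sqrt (1 / (2 * (n:ℝ))) * (1 - 1 / (2 * ((n:ℝ)+1)))) := by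
            nlinarith [key]
        _ = ((1/2) * Real.sqrt (1 / (2 * (n:ℝ)))) * (1 - 1 / (2 * ((n:ℝ)+1))) := by ring
        _ ≤ (∏ k ∈ Finset.Icc 1 n, (1 - 1 / (2 * (k : ℝ)))) * (1 - 1 / (2 * ((n:ℝ)+1))) := by
            apply mul_le_mul_of_nonneg_right ih hc.le
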